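/- UTxO transaction commutativity: let h : Tx → B be injective and let n : ℕ. Suppose u, u' : ℕ → Set (OutputRef × O) and t, t' : ℕ → Tx are such that: u 0 = u' 0 and u 0 is well-founded; both (u, t) and (u', t') satisfy the valid-trace conditions for every step k ≤ n (inputs nonempty, inputs contained in the current state, and the update rule); and there exists a permutation σ of Fin (n+1) with t' k = t (σ k) for all k ≤ n. Then the final states agree: u (n+1) = u' (n+1). -/

import Mathlib

/-- Output references spent by a transaction: keys of its inputs. -/
def getORefs {B O Tx : Type*} (inputs : Tx → Set ((B × ℕ) × O)) (t : Tx) :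
    Set (B × ℕ) :=
  {r | ∃ o, (r, o) ∈ inputs t}

/-- UTxO entries created by a transaction: the `i`-th output of `t` keyed by `(h t, i)`. -/
def mkOuts {B O Tx : Type*} (outputs : Tx → List O) (hsh : Tx → B) (t : Tx) :
    Set ((B × ℕ) × O) :=
  {p | ∃ i o, (outputs t)[(i : ℕ)]? = some o ∧ p = ((hsh t, i), o)}

/-- A UTxO set is well-founded if the hash part of each of its keys comes from a
transaction with empty inputs. -/
def WellFoundedUTxO {B O Tx : Type*} (inputs : Tx → Set ((B × ℕ) × O)) (hsh : Tx → B)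
    (u₀ : Set ((B × ℕ) × O)) : Prop :=
  ∀ b n o, ((b, n), o) ∈ u₀ → ∃ t₀ : Tx, hsh t₀ = b ∧ inputs t₀ = ∅

/-- The valid-trace conditions at step `k`: nonempty inputs, inputs present in the
current state, and the UTxO update rule. -/
def ValidStep {B O Tx : Type*} (inputs : Tx → Set ((B × ℕ) × O))
    (outputs : Tx → List O) (hsh : Tx → B)
    (u : ℕ → Set ((B × ℕ) × O)) (t : ℕ → Tx) (k : ℕ) : Prop :=
  inputs (t k) ≠ ∅ ∧ inputs (t k) ⊆ u k ∧
    u (k + 1) = {p | p ∈ u k ∧ p.1 ∉ getORefs inputs (t k)} ∪ mkOuts outputs hsh (t k)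

/-- A valid ledger trace: the valid-trace conditions hold at every step. -/
def ValidLedgerTrace {B O Tx : Type*} (inputs : Tx → Set ((B × ℕ) × O))
    (outputs : Tx → List O) (hsh : Tx → B)
    (u : ℕ → Set ((B × ℕ) × O)) (t : ℕ → Tx) : Prop :=
  ∀ k, ValidStep inputs outputs hsh u t k

section Aux

variable {B O Tx : Type*} (inputs : Tx → Set ((B × ℕ) × O)) (outputs : Tx → List O)
  (hsh : Tx → B)

lemma trace_formula (u : ℕ → Set ((B × ℕ) × O)) (t : ℕ → Tx) (n : ℕ)
    (hsteps : ∀ k ≤ n, ValidStep inputs outputs hsh u t k) :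
    ∀ m ≤ n + 1, ∀ p, p ∈ u m ↔
      ((p ∈ u 0 ∧ ∀ j < m, p.1 ∉ getORefs inputs (t j)) ∨
       ∃ k < m, p ∈ mkOuts outputs hsh (t k) ∧
         ∀ j, k < j → j < m → p.1 ∉ getORefs inputs (t j)) := by
  intro m
  induction m with
  | zero => intro _ p; simp
  | succ m ih =>
    intro hm p
    have hmn : m ≤ n := Nat.lt_succ_iff.mp hm
    obtain ⟨-, -, hupd⟩ := hsteps m hmn
    have ihm := ih (Nat.le_succ_of_le hmn)
    constructor
    · intro hp
      rw [hupd] at hp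
      rcases hp with ⟨hpm, hpns⟩ | hmk
      · rcases (ihm p).1 hpm with ⟨h0, hns⟩ | ⟨k, hk, hmk, hns⟩
        · refine Or.inl ⟨h0, fun j hj => ?_⟩
          rcases Nat.lt_or_ge j m with h | h
          · exact hns j h
          · have : j = m := by omega
            subst this; exact hpns
        · refine Or.inr ⟨k, by omega, hmk, fun j hkj hj => ?_⟩
          rcases Nat.lt_or_ge j m with h | h
          · exact hns j hkj h
          · have : j = m := by omega
            subst this; exact hpns
      · exact Or.inr ⟨m, Nat.lt_succ_self m, hmk, fun j hmj hj => absurd hj (by omega)⟩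
    · intro hp
      rw [hupd]
      rcases hp with ⟨h0, hns⟩ | ⟨k, hk, hmk, hns⟩
      · exact Or.inl ⟨(ihm p).2 (Or.inl ⟨h0, fun j hj => hns j (by omega)⟩),
          hns m (Nat.lt_succ_self m)⟩
      · rcases Nat.lt_or_ge k m with hkm | hkm
        · exact Or.inl ⟨(ihm p).2 (Or.inr ⟨k, hkm, hmk,
            fun j hkj hj => hns j hkj (by omega)⟩),
            hns m hkm (Nat.lt_succ_self m)⟩
        · have : k = m := by omega
          subst this; exact Or.inr hmk

lemma trace_distinct (hinj : Function.Injective hsh)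
    (u : ℕ → Set ((B × ℕ) × O)) (t : ℕ → Tx) (n : ℕ)
    (hwf : WellFoundedUTxO inputs hsh (u 0))
    (hsteps : ∀ k ≤ n, ValidStep inputs outputs hsh u t k) :
    ∀ k ≤ n, ∀ i < k, t i ≠ t k := by
  intro k
  induction k using Nat.strong_induction_on with
  | _ k IH =>
    intro hk i hik teq
    obtain ⟨ro, hro⟩ := Set.nonempty_iff_ne_empty.mpr (hsteps k hk).1
    have hmem : ro ∈ u k := (hsteps k hk).2.1 hro
    have hki : ro.1 ∈ getORefs inputs (t i) :=
      ⟨ro.2, by rw [teq]; simpa using hro⟩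
    rcases (trace_formula inputs outputs hsh u t n hsteps k (by omega) ro).1 hmem with
      ⟨h0, hns⟩ | ⟨l, hlk, hmkl, hns⟩
    · exact hns i hik hki
    · obtain ⟨i', o', -, heq⟩ := hmkl
      have hro1 : ro.1.1 = hsh (t l) := by rw [heq]
      have hil : i ≤ l := by
        by_contra h
        exact hns i (by omega) hik hki
      obtain ⟨o₂, ho₂⟩ := hki
      have hmem2 : (ro.1, o₂) ∈ u i := (hsteps i (by omega)).2.1 ho₂
      rcases (trace_formula inputs outputs hsh u t n hsteps i (by omega) (ro.1, o₂)).1 hmem2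
        with ⟨h0', -⟩ | ⟨l', hl'i, hmkl', -⟩
      · obtain ⟨t₀, ht₀, he₀⟩ := hwf ro.1.1 ro.1.2 o₂ (by simpa using h0')
        have ht : t₀ = t l := hinj (by rw [ht₀, hro1])
        exact (hsteps l (by omega)).1 (ht ▸ he₀)
      · obtain ⟨i'', o'', -, heq'⟩ := hmkl'
        have hro1' : ro.1.1 = hsh (t l') := by
          have := congrArg (fun p => p.1.1) heq'
          simpa using this
        have ht : t l' = t l := hinj (by rw [← hro1', ← hro1])
        exact IH l (by omega) (by omega) l' (by omega) ht

lemma no_early_spend (hinj : Function.Injective hsh)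
    (u : ℕ → Set ((B × ℕ) × O)) (t : ℕ → Tx) (n : ℕ)
    (hwf : WellFoundedUTxO inputs hsh (u 0))
    (hsteps : ∀ k ≤ n, ValidStep inputs outputs hsh u t k) :
    ∀ k ≤ n, ∀ j ≤ k, ∀ i : ℕ, (hsh (t k), i) ∉ getORefs inputs (t j) := by
  intro k hk j hjk i hsp
  obtain ⟨o, ho⟩ := hsp
  have hmem : ((hsh (t k), i), o) ∈ u j := (hsteps j (by omega)).2.1 ho
  rcases (trace_formula inputs outputs hsh u t n hsteps j (by omega) _).1 hmem with
    ⟨h0, -⟩ | ⟨l, hlj, hmkl, -⟩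
  · obtain ⟨t₀, ht₀, he₀⟩ := hwf (hsh (t k)) i o h0
    have ht : t₀ = t k := hinj ht₀
    exact (hsteps k hk).1 (ht ▸ he₀)
  · obtain ⟨i', o', -, heq⟩ := hmkl
    have hh : hsh (t k) = hsh (t l) := by
      have := congrArg (fun p => p.1.1) heq
      simpa using this
    exact trace_distinct inputs outputs hsh hinj u t n hwf hsteps k hk l (by omega)
      (hinj hh.symm)

lemma final_formula (hinj : Function.Injective hsh)
    (u : ℕ → Set ((B × ℕ) × O)) (t : ℕ → Tx) (n : ℕ)
    (hwf : WellFoundedUTxO inputs hsh (u 0))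
    (hsteps : ∀ k ≤ n, ValidStep inputs outputs hsh u t k) (p : (B × ℕ) × O) :
    p ∈ u (n + 1) ↔
      ((p ∈ u 0 ∨ ∃ k ≤ n, p ∈ mkOuts outputs hsh (t k)) ∧
        ∀ j ≤ n, p.1 ∉ getORefs inputs (t j)) := by
  rw [trace_formula inputs outputs hsh u t n hsteps (n + 1) le_rfl p]
  constructor
  · rintro (⟨h0, hns⟩ | ⟨k, hk, hmk, hns⟩)
    · exact ⟨Or.inl h0, fun j hj => hns j (by omega)⟩
    · refine ⟨Or.inr ⟨k, by omega, hmk⟩, fun j hj => ?_⟩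
      rcases Nat.lt_or_ge k j with h | h
      · exact hns j h (by omega)
      · obtain ⟨i, o, -, heq⟩ := hmk
        have hp1 : p.1 = (hsh (t k), i) := by rw [heq]
        rw [hp1]
        exact no_early_spend inputs outputs hsh hinj u t n hwf hsteps k (by omega) j h i
  · rintro ⟨h0 | ⟨k, hk, hmk⟩, hns⟩
    · exact Or.inl ⟨h0, fun j hj => hns j (by omega)⟩
    · exact Or.inr ⟨k, by omega, hmk, fun j _ hj => hns j (by omega)⟩


end Aux

/-- UTxO transaction commutativity: applying two valid sequences of transactions that
are permutations of each other to the same well-founded initial state yields the same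
final state. -/
theorem utxo_transaction_commutativity {B O Tx : Type*}
    (inputs : Tx → Set ((B × ℕ) × O)) (outputs : Tx → List O) (hsh : Tx → B)
    (hinj : Function.Injective hsh) (n : ℕ)
    (u u' : ℕ → Set ((B × ℕ) × O)) (t t' : ℕ → Tx)
    (h0 : u 0 = u' 0) (hwf : WellFoundedUTxO inputs hsh (u 0))
    (hsteps : ∀ k ≤ n, ValidStep inputs outputs hsh u t k)
    (hsteps' : ∀ k ≤ n, ValidStep inputs outputs hsh u' t' k)
    (hperm : ∃ σ : Equiv.Perm (Fin (n + 1)), ∀ k : Fin (n + 1), t' k = t (σ k)) :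
    u (n + 1) = u' (n + 1) := by
  obtain ⟨σ, hσ⟩ := hperm
  have hwf' : WellFoundedUTxO inputs hsh (u' 0) := h0 ▸ hwf
  have hex : ∀ P : Tx → Prop, (∃ k ≤ n, P (t k)) ↔ (∃ k ≤ n, P (t' k)) := by
    intro P
    constructor
    · rintro ⟨k, hk, hP⟩
      refine ⟨(σ.symm ⟨k, by omega⟩ : Fin (n + 1)), by
        have := (σ.symm ⟨k, by omega⟩).isLt; omega, ?_⟩
      have h1 : t' ((σ.symm ⟨k, by omega⟩ : Fin (n + 1)) : ℕ) = t (σ (σ.symm ⟨k, by omega⟩)) := by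
        simpa using hσ (σ.symm ⟨k, by omega⟩)
      rw [h1, Equiv.apply_symm_apply]
      exact hP
    · rintro ⟨k, hk, hP⟩
      refine ⟨(σ ⟨k, by omega⟩ : Fin (n + 1)), by
        have := (σ ⟨k, by omega⟩).isLt; omega, ?_⟩
      have h1 : t' k = t ((σ ⟨k, by omega⟩ : Fin (n + 1)) : ℕ) := by
        simpa using hσ ⟨k, by omega⟩
      rw [← h1]
      exact hP
  ext p
  rw [
    final_formula inputs outputs hsh hinj u t n hwf hsteps p,
    final_formula inputs outputs hsh hinj u' t' n hwf' hsteps' p, h0]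
  have h1 := hex (fun X => p ∈ mkOuts outputs hsh X)
  have h2 := hex (fun X => p.1 ∈ getORefs inputs X)
  constructor
  · rintro ⟨ha, hb⟩
    refine ⟨?_, fun j hj hg => ?_⟩
    · rcases ha with h | h
      · exact Or.inl h
      · exact Or.inr (h1.mp h)
    · obtain ⟨j', hj', hg'⟩ := h2.mpr ⟨j, hj, hg⟩
      exact hb j' hj' hg'
  · rintro ⟨ha, hb⟩
    refine ⟨?_, fun j hj hg => ?_⟩
    · rcases ha with h | h
      · exact Or.inl h
      · exact Or.inr (h1.mpr h)
    · obtain ⟨j', hj', hg'⟩ := h2.mp ⟨j, hj, hg⟩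
      exact hb j' hj' hg'
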